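/- Let f(z) = z + ∑_{n=2}^∞ aₙ zⁿ be analytic on the unit disk 𝔻 with |aₙ| ≤ n for all n ≥ 2, and suppose |f(z)| ≥ 1/4 for all z in a punctured neighborhood of the boundary, so that d(0, ∂f(𝔻)) ≥ 1/4. Let Φ : [0,1] → [0,∞) be continuous and increasing, and let ω : 𝔻 → 𝔻 be analytic with |ω(z)| ≤ |z|. Then |ω(z)| + ∑_{n=2}^∞ |aₙ| |ω(z)|ⁿ + Φ(|ω(z)|) ∑_{n=2}^∞ |aₙ|² |ω(z)|^{2n} ≤ 1/4 ≤ d(0, ∂f(𝔻)) whenever |z| = r ≤ R, where R ∈ (0,1) is the unique root of F(r) := r/(1−r)² + Φ(r)·r⁴(r⁴ − 3r² + 4)/(1 − 3r² + 3r⁴ − r⁶) − 1/4 = 0. -/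

import Mathlib

open Set Metric

lemma sq_geom_tsum {t : ℝ} (h0 : 0 ≤ t) (h1 : t < 1) :
    ∑' n : ℕ, (n : ℝ) ^ 2 * t ^ n = t * (1 + t) / (1 - t) ^ 3 := by
  have hn : ‖t‖ < 1 := by rwa [Real.norm_eq_abs, abs_of_nonneg h0]
  have hs2 : Summable (fun n : ℕ => (n : ℝ) ^ 2 * t ^ n) :=
    summable_pow_mul_geometric_of_norm_lt_one 2 hn
  have hs1 : Summable (fun n : ℕ => (n : ℝ) * t ^ n) :=
    (hasSum_coe_mul_geometric_of_norm_lt_one hn).summable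
  have hs0 : Summable (fun n : ℕ => t ^ n) := summable_geometric_of_lt_one h0 h1
  set S := ∑' n : ℕ, (n : ℝ) ^ 2 * t ^ n with hS
  have hshift : S = ∑' n : ℕ, ((n + 1 : ℕ) : ℝ) ^ 2 * t ^ (n + 1) := by
    rw [hS, Summable.tsum_eq_zero_add hs2]
    simp
  have hterm : ∀ n : ℕ, ((n + 1 : ℕ) : ℝ) ^ 2 * t ^ (n + 1) =
      t * ((n : ℝ) ^ 2 * t ^ n) + (2 * t) * ((n : ℝ) * t ^ n) + t * t ^ n := by
    intro n; push_cast; ring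
  have heq : S = t * S + (2 * t) * (t / (1 - t) ^ 2) + t * (1 - t)⁻¹ := by
    nth_rewrite 1 [hshift]
    simp_rw [hterm]
    rw [Summable.tsum_add ((hs2.mul_left t).add ((hs1.mul_left (2*t)))) (hs0.mul_left t),
      Summable.tsum_add (hs2.mul_left t) (hs1.mul_left (2*t)), tsum_mul_left, tsum_mul_left,
      tsum_mul_left, tsum_coe_mul_geometric_of_norm_lt_one hn, tsum_geometric_of_lt_one h0 h1]
  have h1t : (1 : ℝ) - t ≠ 0 := by linarith
  have : S * (1 - t) = (2 * t) * (t / (1 - t) ^ 2) + t * (1 - t)⁻¹ := by linarith [heq]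
  field_simp at this
  rw [eq_div_iff (by positivity : ((1:ℝ) - t) ^ 3 ≠ 0)]
  nlinarith [this]

lemma coe_geom_tsum_shift {t : ℝ} (h0 : 0 ≤ t) (h1 : t < 1) :
    ∑' n : ℕ, ((n + 2 : ℕ) : ℝ) * t ^ (n + 2) = t / (1 - t) ^ 2 - t := by
  have hn : ‖t‖ < 1 := by rwa [Real.norm_eq_abs, abs_of_nonneg h0]
  have hs1 : Summable (fun n : ℕ => (n : ℝ) * t ^ n) :=
    (hasSum_coe_mul_geometric_of_norm_lt_one hn).summable
  have := Summable.sum_add_tsum_nat_add 2 hs1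
  rw [tsum_coe_mul_geometric_of_norm_lt_one hn] at this
  simp only [Finset.sum_range_succ, Finset.sum_range_zero] at this
  push_cast at this ⊢
  linarith [this]

lemma sq_geom_tsum_shift {t : ℝ} (h0 : 0 ≤ t) (h1 : t < 1) :
    ∑' n : ℕ, ((n + 2 : ℕ) : ℝ) ^ 2 * t ^ (n + 2) = t * (1 + t) / (1 - t) ^ 3 - t := by
  have hn : ‖t‖ < 1 := by rwa [Real.norm_eq_abs, abs_of_nonneg h0]
  have hs2 : Summable (fun n : ℕ => (n : ℝ) ^ 2 * t ^ n) :=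
    summable_pow_mul_geometric_of_norm_lt_one 2 hn
  have := Summable.sum_add_tsum_nat_add 2 hs2
  rw [sq_geom_tsum h0 h1] at this
  simp only [Finset.sum_range_succ, Finset.sum_range_zero] at this
  push_cast at this ⊢
  linarith [this]

theorem stmt4 (f : ℂ → ℂ) (a : ℕ → ℂ)
    (hf : AnalyticOn ℂ f (ball 0 1))
    (hrep : ∀ z ∈ ball (0:ℂ) 1, f z = z + ∑' n : ℕ, a (n + 2) * z ^ (n + 2))
    (ha : ∀ n, 2 ≤ n → ‖a n‖ ≤ (n : ℝ))
    (hd : 1 / 4 ≤ infDist 0 (frontier (f '' ball 0 1)))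
    (Φ : ℝ → ℝ) (hΦc : ContinuousOn Φ (Icc 0 1))
    (hΦm : MonotoneOn Φ (Icc 0 1)) (hΦ0 : ∀ x ∈ Icc (0:ℝ) 1, 0 ≤ Φ x)
    (ω : ℂ → ℂ) (hωmap : ∀ z ∈ ball (0:ℂ) 1, ω z ∈ ball (0:ℂ) 1)
    (hω : ∀ z ∈ ball (0:ℂ) 1, ‖ω z‖ ≤ ‖z‖)
    (R : ℝ) (hR : R ∈ Ioo (0:ℝ) 1)
    (hroot : R / (1 - R) ^ 2
        + Φ R * (R ^ 4 * (R ^ 4 - 3 * R ^ 2 + 4) / (1 - 3 * R ^ 2 + 3 * R ^ 4 - R ^ 6))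
        - 1 / 4 = 0)
    (huniq : ∀ r ∈ Ioo (0:ℝ) 1,
      r / (1 - r) ^ 2
        + Φ r * (r ^ 4 * (r ^ 4 - 3 * r ^ 2 + 4) / (1 - 3 * r ^ 2 + 3 * r ^ 4 - r ^ 6))
        - 1 / 4 = 0 → r = R) :
    ∀ z : ℂ, ‖z‖ ≤ R →
      ‖ω z‖ + (∑' n : ℕ, ‖a (n + 2)‖ * ‖ω z‖ ^ (n + 2))
        + Φ ‖ω z‖ * (∑' n : ℕ, ‖a (n + 2)‖ ^ 2 * ‖ω z‖ ^ (2 * (n + 2)))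
      ≤ 1 / 4 ∧ (1 : ℝ) / 4 ≤ infDist 0 (frontier (f '' ball 0 1)) := by
  obtain ⟨hR0, hR1⟩ := hR
  intro z hz
  refine ⟨?_, hd⟩
  have hz1 : z ∈ ball (0:ℂ) 1 := by
    rw [mem_ball_zero_iff]; exact lt_of_le_of_lt (by exact_mod_cast hz) (by exact_mod_cast hR1)
  set r := ‖ω z‖ with hr
  have hr0 : 0 ≤ r := norm_nonneg _
  have hrR : r ≤ R := (hω z hz1).trans hz
  have hr1 : r < 1 := lt_of_le_of_lt hrR hR1
  have hRn : ‖R‖ < 1 := by rwa [Real.norm_eq_abs, abs_of_nonneg hR0.le]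
  -- summability of majorants
  have hs1R : Summable (fun n : ℕ => ((n + 2 : ℕ) : ℝ) * R ^ (n + 2)) :=
    ((hasSum_coe_mul_geometric_of_norm_lt_one hRn).summable).comp_injective
      (add_left_injective 2)
  have hR2n : ‖R ^ 2‖ < 1 := by
    rw [Real.norm_eq_abs, abs_of_nonneg (by positivity)]
    nlinarith
  have hs2R : Summable (fun n : ℕ => ((n + 2 : ℕ) : ℝ) ^ 2 * (R ^ 2) ^ (n + 2)) :=
    ((summable_pow_mul_geometric_of_norm_lt_one 2 hR2n)).comp_injective
      (add_left_injective 2)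
  -- term bounds
  have hterm1 : ∀ n : ℕ, ‖a (n + 2)‖ * r ^ (n + 2) ≤ ((n + 2 : ℕ) : ℝ) * R ^ (n + 2) := by
    intro n
    have h1 : ‖a (n + 2)‖ ≤ ((n + 2 : ℕ) : ℝ) := ha (n + 2) (by omega)
    have h2 : r ^ (n + 2) ≤ R ^ (n + 2) := pow_le_pow_left₀ hr0 hrR _
    exact mul_le_mul h1 h2 (by positivity) (by positivity)
  have hterm2 : ∀ n : ℕ, ‖a (n + 2)‖ ^ 2 * r ^ (2 * (n + 2)) ≤
      ((n + 2 : ℕ) : ℝ) ^ 2 * (R ^ 2) ^ (n + 2) := by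
    intro n
    have h1 : ‖a (n + 2)‖ ≤ ((n + 2 : ℕ) : ℝ) := ha (n + 2) (by omega)
    have h1' : ‖a (n + 2)‖ ^ 2 ≤ ((n + 2 : ℕ) : ℝ) ^ 2 :=
      pow_le_pow_left₀ (norm_nonneg _) h1 2
    have h2 : r ^ (2 * (n + 2)) ≤ (R ^ 2) ^ (n + 2) := by
      have h2' : r ^ 2 ≤ R ^ 2 := by nlinarith
      rw [pow_mul]
      exact pow_le_pow_left₀ (by positivity) h2' _
    exact mul_le_mul h1' h2 (by positivity) (by positivity)
  -- summability of actual sums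
  have hsum1 : Summable (fun n : ℕ => ‖a (n + 2)‖ * r ^ (n + 2)) :=
    Summable.of_nonneg_of_le (fun n => by positivity) hterm1 hs1R
  have hsum2 : Summable (fun n : ℕ => ‖a (n + 2)‖ ^ 2 * r ^ (2 * (n + 2))) :=
    Summable.of_nonneg_of_le (fun n => by positivity) hterm2 hs2R
  -- tsum bounds
  have hT1 : (∑' n : ℕ, ‖a (n + 2)‖ * r ^ (n + 2)) ≤ R / (1 - R) ^ 2 - R := by
    rw [← coe_geom_tsum_shift hR0.le hR1]
    exact Summable.tsum_le_tsum hterm1 hsum1 hs1R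
  have hT2 : (∑' n : ℕ, ‖a (n + 2)‖ ^ 2 * r ^ (2 * (n + 2))) ≤
      R ^ 4 * (R ^ 4 - 3 * R ^ 2 + 4) / (1 - 3 * R ^ 2 + 3 * R ^ 4 - R ^ 6) := by
    have key : ∑' n : ℕ, ((n + 2 : ℕ) : ℝ) ^ 2 * (R ^ 2) ^ (n + 2) =
        R ^ 4 * (R ^ 4 - 3 * R ^ 2 + 4) / (1 - 3 * R ^ 2 + 3 * R ^ 4 - R ^ 6) := by
      rw [sq_geom_tsum_shift (by positivity) (by nlinarith)]
      have hpos : (0 : ℝ) < 1 - R ^ 2 := by nlinarith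
      have h1 : (1 : ℝ) - R ^ 2 ≠ 0 := hpos.ne'
      have h2 : (1 : ℝ) - 3 * R ^ 2 + 3 * R ^ 4 - R ^ 6 ≠ 0 := by
        nlinarith [pow_pos hpos 3]
      rw [show (1 : ℝ) - 3 * R ^ 2 + 3 * R ^ 4 - R ^ 6 = (1 - R ^ 2) ^ 3 by ring]
      field_simp
      ring
    rw [← key]
    exact Summable.tsum_le_tsum hterm2 hsum2 hs2R
  -- Φ bound
  have hrIcc : r ∈ Icc (0:ℝ) 1 := ⟨hr0, hr1.le⟩
  have hRIcc : R ∈ Icc (0:ℝ) 1 := ⟨hR0.le, hR1.le⟩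
  have hΦrR : Φ r ≤ Φ R := hΦm hrIcc hRIcc hrR
  have hΦr0 : 0 ≤ Φ r := hΦ0 r hrIcc
  have hΦR0 : 0 ≤ Φ R := hΦ0 R hRIcc
  have hT2nn : 0 ≤ ∑' n : ℕ, ‖a (n + 2)‖ ^ 2 * r ^ (2 * (n + 2)) :=
    tsum_nonneg (fun n => by positivity)
  have hΦbound : Φ r * (∑' n : ℕ, ‖a (n + 2)‖ ^ 2 * r ^ (2 * (n + 2))) ≤
      Φ R * (R ^ 4 * (R ^ 4 - 3 * R ^ 2 + 4) / (1 - 3 * R ^ 2 + 3 * R ^ 4 - R ^ 6)) :=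
    mul_le_mul hΦrR hT2 hT2nn hΦR0
  linarith [hroot, hT1, hΦbound, hrR]
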